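/- Let (X,p) be a TVS-cone metric space over E with cone P and fix e ∈ int P. Then (X,p) is cone-complete if and only if the metric space (X, d_p) is complete, i.e., every sequence (x_n) that is Cauchy for d_p admits a point x ∈ X with d_p(x_n, x) → 0. -/

import Mathlib

open Filter Topology

section Defs

variable {E : Type*} [AddCommGroup E] [Module ℝ E] [TopologicalSpace E]

/-- `P` is a closed, pointed convex cone with nonempty interior in the TVS `E`. -/
structure IsTVSCone (P : Set E) : Prop where
  add_mem : ∀ ⦃a⦄, a ∈ P → ∀ ⦃b⦄, b ∈ P → a + b ∈ P
  smul_mem : ∀ (r : ℝ), 0 ≤ r → ∀ ⦃a⦄, a ∈ P → r • a ∈ P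
  pointed : ∀ a, a ∈ P → -a ∈ P → a = 0
  isClosed : IsClosed P
  int_nonempty : (interior P).Nonempty

/-- `a ≤ b` with respect to the cone `P`. -/
def ConeLe (P : Set E) (a b : E) : Prop := b - a ∈ P

/-- `a ≪ b` with respect to the cone `P`. -/
def ConeLt (P : Set E) (a b : E) : Prop := b - a ∈ interior P

/-- `p : X × X → E` is a TVS-cone metric over the cone `P`. -/
structure IsConeMetric (P : Set E) {X : Type*} (p : X → X → E) : Prop where
  nonneg : ∀ x y, ConeLe P 0 (p x y)
  eq_zero_iff : ∀ x y, p x y = 0 ↔ x = y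
  symm : ∀ x y, p x y = p y x
  triangle : ∀ x y z, ConeLe P (p x y) (p x z + p z y)

/-- The sequence `x` cone-converges to `a`. -/
def ConeConverges (P : Set E) {X : Type*} (p : X → X → E) (x : ℕ → X) (a : X) : Prop :=
  ∀ c, c ∈ interior P → ∃ N, ∀ n ≥ N, ConeLt P (p (x n) a) c

/-- The sequence `x` is cone-Cauchy. -/
def ConeCauchy (P : Set E) {X : Type*} (p : X → X → E) (x : ℕ → X) : Prop :=
  ∀ c, c ∈ interior P → ∃ N, ∀ n ≥ N, ∀ m ≥ N, ConeLt P (p (x n) (x m)) c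

/-- `(X, p)` is cone-complete. -/
def ConeComplete (P : Set E) {X : Type*} (p : X → X → E) : Prop :=
  ∀ x : ℕ → X, ConeCauchy P p x → ∃ a, ConeConverges P p x a

/-- The nonlinear scalarization ξ_e(y) = inf {t : t • e - y ∈ P}. -/
noncomputable def xiScal (P : Set E) (e y : E) : ℝ := sInf {t : ℝ | t • e - y ∈ P}

/-- The open ball `B(x, c) = {y : p x y ≪ c}`. -/
def coneBall (P : Set E) {X : Type*} (p : X → X → E) (x : X) (c : E) : Set X :=
  {y | ConeLt P (p x y) c}

/-- The cone metric topology `τ_p`, generated by the balls `B(x,c)`, `c ≫ 0`. -/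
def coneTopology (P : Set E) {X : Type*} (p : X → X → E) : TopologicalSpace X :=
  TopologicalSpace.generateFrom {s | ∃ x c, c ∈ interior P ∧ s = coneBall P p x c}

end Defs

section Aux

variable {E : Type*} [AddCommGroup E] [Module ℝ E] [TopologicalSpace E]
  [IsTopologicalAddGroup E] [ContinuousSMul ℝ E]

/-- A continuous path starting in an open set stays in it for some positive parameter. -/
lemma exists_pos_mem_of_open {f : ℝ → E} {U : Set E} (hf : Continuous f) (hU : IsOpen U)
    (h0 : f 0 ∈ U) : ∃ ε : ℝ, 0 < ε ∧ f ε ∈ U := by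
  have h1 : ∀ᶠ t in 𝓝 (0:ℝ), f t ∈ U := (hf.tendsto 0).eventually (hU.eventually_mem h0)
  have h2 : ∀ᶠ t in 𝓝[>] (0:ℝ), f t ∈ U := h1.filter_mono nhdsWithin_le_nhds
  obtain ⟨t, htU, ht⟩ := (h2.and self_mem_nhdsWithin).exists
  exact ⟨t, ht, htU⟩

lemma intP_add_mem {P : Set E} (hP : IsTVSCone P) {a b : E}
    (ha : a ∈ interior P) (hb : b ∈ P) : a + b ∈ interior P := by
  have hopen : IsOpen ((· + b) '' interior P) :=
    (Homeomorph.addRight b).isOpenMap _ isOpen_interior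
  have hsub : ((· + b) '' interior P) ⊆ P := by
    rintro _ ⟨z, hz, rfl⟩
    exact hP.add_mem (interior_subset hz) hb
  exact interior_maximal hsub hopen ⟨a, ha, rfl⟩

lemma intP_smul_mem {P : Set E} (hP : IsTVSCone P) {a : E} {r : ℝ}
    (hr : 0 < r) (ha : a ∈ interior P) : r • a ∈ interior P := by
  set U : Set E := (fun x => r⁻¹ • x) ⁻¹' (interior P) with hU
  have hopen : IsOpen U := isOpen_interior.preimage (continuous_const_smul _)
  have hsub : U ⊆ P := fun x hx => by
    have : r • (r⁻¹ • x) ∈ P := hP.smul_mem r hr.le (interior_subset hx)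
    rwa [smul_inv_smul₀ hr.ne'] at this
  have hmem : r • a ∈ U := by
    simp only [hU, Set.mem_preimage, inv_smul_smul₀ hr.ne']
    exact ha
  exact interior_maximal hsub hopen hmem

lemma zero_not_mem_intP {P : Set E} [Nontrivial E] (hP : IsTVSCone P) :
    (0:E) ∉ interior P := by
  intro h0
  obtain ⟨a, ha⟩ := exists_ne (0:E)
  have h1 : ∀ᶠ t in 𝓝 (0:ℝ), t • a ∈ interior P := by
    have hc : Tendsto (fun t : ℝ => t • a) (𝓝 0) (𝓝 0) := by
      have : Tendsto (fun t : ℝ => t • a) (𝓝 0) (𝓝 ((0:ℝ) • a)) := (continuous_id.smul continuous_const : Continuous fun t : ℝ => t • a).tendsto 0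
      simpa using this
    exact hc.eventually (isOpen_interior.eventually_mem h0)
  have h2 : ∀ᶠ t in 𝓝 (0:ℝ), t • (-a) ∈ interior P := by
    have hc : Tendsto (fun t : ℝ => t • (-a)) (𝓝 0) (𝓝 0) := by
      have : Tendsto (fun t : ℝ => t • (-a)) (𝓝 0) (𝓝 ((0:ℝ) • (-a))) := (continuous_id.smul continuous_const : Continuous fun t : ℝ => t • (-a)).tendsto 0
      simpa using this
    exact hc.eventually (isOpen_interior.eventually_mem h0)
  have h3 : ∀ᶠ t in 𝓝[>] (0:ℝ), t • a ∈ interior P ∧ t • (-a) ∈ interior P :=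
    (h1.and h2).filter_mono nhdsWithin_le_nhds
  obtain ⟨t, ⟨hta, htna⟩, ht⟩ := (h3.and self_mem_nhdsWithin).exists
  have hz : t • a = 0 := by
    apply hP.pointed _ (interior_subset hta)
    rw [← smul_neg]
    exact interior_subset htna
  rcases smul_eq_zero.mp hz with h | h
  · exact absurd h (ne_of_gt ht)
  · exact ha h

lemma xi_set_nonempty {P : Set E} (hP : IsTVSCone P) {e : E} (he : e ∈ interior P) (y : E) :
    {t : ℝ | t • e - y ∈ P}.Nonempty := by
  obtain ⟨s, hs, hmem⟩ := exists_pos_mem_of_open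
    (f := fun t : ℝ => e - t • y) (U := interior P)
    (continuous_const.sub (continuous_id.smul continuous_const)) isOpen_interior (by simpa using he)
  refine ⟨s⁻¹, ?_⟩
  have : s⁻¹ • (e - s • y) ∈ P :=
    hP.smul_mem _ (inv_nonneg.mpr hs.le) (interior_subset hmem)
  rwa [smul_sub, smul_smul, inv_mul_cancel₀ hs.ne', one_smul] at this

lemma xi_set_mem_nonneg {P : Set E} [Nontrivial E] (hP : IsTVSCone P) {e : E}
    (he : e ∈ interior P) {y : E} (hy : y ∈ P) {t : ℝ}
    (ht : t • e - y ∈ P) : 0 ≤ t := by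
  by_contra h
  push_neg at h
  have hte : t • e ∈ P := by
    have := hP.add_mem ht hy
    rwa [sub_add_cancel] at this
  have hne : -e ∈ P := by
    have hnt : -t ≠ 0 := ne_of_gt (by linarith)
    have h1 : (-t)⁻¹ * t = -1 := by
      rw [inv_mul_eq_div, div_eq_iff hnt]; ring
    have := hP.smul_mem (-t)⁻¹ (inv_nonneg.mpr (by linarith)) hte
    rwa [smul_smul, h1, neg_one_smul] at this
  have : e = 0 := hP.pointed e (interior_subset he) hne
  exact zero_not_mem_intP hP (this ▸ he)

lemma xi_nonneg {P : Set E} [Nontrivial E] (hP : IsTVSCone P) {e : E}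
    (he : e ∈ interior P) {y : E} (hy : y ∈ P) : 0 ≤ xiScal P e y :=
  le_csInf (xi_set_nonempty hP he y) (fun t ht => xi_set_mem_nonneg hP he hy ht)

lemma xi_le {P : Set E} [Nontrivial E] (hP : IsTVSCone P) {e : E}
    (he : e ∈ interior P) {y : E} (hy : y ∈ P) {t : ℝ}
    (ht : t • e - y ∈ P) : xiScal P e y ≤ t :=
  csInf_le ⟨0, fun s hs => xi_set_mem_nonneg hP he hy hs⟩ ht

/-- If `ξ_e(y) < ε` and `c - ε•e ≫ 0` then `y ≪ c`. -/
lemma cone_lt_of_xi_lt {P : Set E} (hP : IsTVSCone P) {e : E} (he : e ∈ interior P)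
    {y c : E} {ε : ℝ} (hc : c - ε • e ∈ interior P) (hy : xiScal P e y < ε) :
    c - y ∈ interior P := by
  obtain ⟨t, ht, htε⟩ := exists_lt_of_csInf_lt (xi_set_nonempty hP he y) hy
  have h1 : (ε - t) • e + (t • e - y) ∈ P :=
    hP.add_mem (hP.smul_mem _ (by linarith) (interior_subset he)) ht
  have h2 : c - y = (c - ε • e) + ((ε - t) • e + (t • e - y)) := by
    rw [sub_smul]; abel
  rw [h2]
  exact intP_add_mem hP hc h1

end Aux

/-- `(X,p)` is cone-complete iff the metric space `(X, d_p)` is complete. -/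
theorem stmt_7 {E X : Type*} [AddCommGroup E] [Module ℝ E] [TopologicalSpace E]
    [IsTopologicalAddGroup E] [ContinuousSMul ℝ E] [T2Space E] [Nonempty X]
    (P : Set E) (hP : IsTVSCone P) (p : X → X → E) (hp : IsConeMetric P p)
    (e : E) (he : e ∈ interior P) :
    ConeComplete P p ↔
      ∀ x : ℕ → X,
        (∀ ε : ℝ, 0 < ε → ∃ N, ∀ n ≥ N, ∀ m ≥ N, xiScal P e (p (x n) (x m)) < ε) →
        ∃ a : X, Tendsto (fun n => xiScal P e (p (x n) a)) atTop (nhds 0) := by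
  rcases subsingleton_or_nontrivial E with hE | hE
  · -- degenerate case: E is a subsingleton
    constructor
    · intro _ x _
      refine ⟨x 0, ?_⟩
      have hx : ∀ n, xiScal P e (p (x n) (x 0)) = 0 := by
        intro n
        have hset : {t : ℝ | t • e - p (x n) (x 0) ∈ P} = Set.univ := by
          ext t
          simp only [Set.mem_setOf_eq, Set.mem_univ, iff_true]
          have : t • e - p (x n) (x 0) = e := Subsingleton.elim _ _
          rw [this]; exact interior_subset he
        rw [xiScal, hset]
        apply Real.sInf_of_not_bddBelow
        rintro ⟨b, hb⟩
        have h1 : b ≤ b - 1 := hb (Set.mem_univ (b - 1))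
        linarith
      simp only [hx]
      exact tendsto_const_nhds
    · intro _ x _
      refine ⟨x 0, fun c _ => ⟨0, fun n _ => ?_⟩⟩
      have h1 : c - p (x n) (x 0) = e := Subsingleton.elim _ _
      unfold ConeLt
      rw [h1]; exact he
  · -- main case: E is nontrivial
    have hep : e ∈ P := interior_subset he
    have hpmem : ∀ a b : X, p a b ∈ P := by
      intro a b
      have := hp.nonneg a b
      simpa [ConeLe] using this
    constructor
    · -- cone-complete → metric complete
      intro hcc x hx
      have hcauchy : ConeCauchy P p x := by
        intro c hc
        obtain ⟨ε, hε, hεc⟩ := exists_pos_mem_of_open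
          (f := fun t : ℝ => c - t • e) (U := interior P)
          (continuous_const.sub (continuous_id.smul continuous_const)) isOpen_interior (by simpa using hc)
        obtain ⟨N, hN⟩ := hx ε hε
        exact ⟨N, fun n hn m hm => cone_lt_of_xi_lt hP he hεc (hN n hn m hm)⟩
      obtain ⟨a, ha⟩ := hcc x hcauchy
      refine ⟨a, ?_⟩
      rw [Metric.tendsto_atTop]
      intro ε hε
      have hhalf : (ε/2) • e ∈ interior P := intP_smul_mem hP (by linarith) he
      obtain ⟨N, hN⟩ := ha _ hhalf
      refine ⟨N, fun n hn => ?_⟩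
      have h1 : xiScal P e (p (x n) a) ≤ ε/2 := by
        apply xi_le hP he (hpmem _ _)
        exact interior_subset (hN n hn)
      have h2 : 0 ≤ xiScal P e (p (x n) a) := xi_nonneg hP he (hpmem _ _)
      rw [Real.dist_eq, sub_zero, abs_of_nonneg h2]
      linarith
    · -- metric complete → cone-complete
      intro hmc x hx
      have hdx : ∀ ε : ℝ, 0 < ε → ∃ N, ∀ n ≥ N, ∀ m ≥ N, xiScal P e (p (x n) (x m)) < ε := by
        intro ε hε
        have hhalf : (ε/2) • e ∈ interior P := intP_smul_mem hP (by linarith) he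
        obtain ⟨N, hN⟩ := hx _ hhalf
        refine ⟨N, fun n hn m hm => ?_⟩
        have h1 : xiScal P e (p (x n) (x m)) ≤ ε/2 := by
          apply xi_le hP he (hpmem _ _)
          exact interior_subset (hN n hn m hm)
        linarith
      obtain ⟨a, ha⟩ := hmc x hdx
      refine ⟨a, fun c hc => ?_⟩
      obtain ⟨ε, hε, hεc⟩ := exists_pos_mem_of_open
        (f := fun t : ℝ => c - t • e) (U := interior P)
        (continuous_const.sub (continuous_id.smul continuous_const)) isOpen_interior (by simpa using hc)
      rw [Metric.tendsto_atTop] at ha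
      obtain ⟨N, hN⟩ := ha ε hε
      refine ⟨N, fun n hn => ?_⟩
      have hlt : xiScal P e (p (x n) a) < ε := by
        have := hN n hn
        rw [Real.dist_eq, sub_zero] at this
        exact lt_of_abs_lt this
      exact cone_lt_of_xi_lt hP he hεc hlt
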